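/- Let m, n ≥ 1, let ā, â ∈ ℝ^m have nonnegative entries, let 0 < Ω ≤ Σ_{i∈[m]} â_i, let V > 0 and c ≥ 0, and let U_Ω = {a ∈ ℝ^m : 0 ≤ a_i ≤ â_i for all i, Σ_{i∈[m]} a_i ≤ Ω}. Let B_1, …, B_n be pairwise disjoint subsets of [m] whose union is [m], and suppose at most k of the sets B_1, …, B_n are nonempty, where 1 ≤ k ≤ n. Then sup_{a∈U_Ω} Σ_{j∈[n]} c·max(Σ_{i∈B_j}(ā_i + a_i) − V, 0) ≥ c·(Σ_{i∈[m]} ā_i + Ω − k·V). -/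

import Mathlib

/-- Validity of the overtime symmetry-breaking inequality: if at most `k` bins
are nonempty, the worst-case total overtime is at least
`c · (Σ ā_i + Ω − k·V)`. -/
theorem stmt_2 (m n : ℕ) (hm : 1 ≤ m) (hn : 1 ≤ n)
    (abar ahat : Fin m → ℝ) (habar : ∀ i, 0 ≤ abar i) (hahat : ∀ i, 0 ≤ ahat i)
    (Ω V c : ℝ) (hΩ : 0 < Ω) (hΩub : Ω ≤ ∑ i, ahat i) (hV : 0 < V) (hc : 0 ≤ c)
    (U : Set (Fin m → ℝ))
    (hU : U = {a | (∀ i, 0 ≤ a i ∧ a i ≤ ahat i) ∧ ∑ i, a i ≤ Ω})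
    (B : Fin n → Finset (Fin m))
    (hdisj : ∀ j k : Fin n, j ≠ k → Disjoint (B j) (B k))
    (hcover : ∀ i : Fin m, ∃ j : Fin n, i ∈ B j)
    (k : ℕ) (hk1 : 1 ≤ k) (hkn : k ≤ n)
    (hknonempty : (Finset.univ.filter (fun j : Fin n => (B j).Nonempty)).card ≤ k) :
    c * ((∑ i, abar i) + Ω - k * V) ≤
      sSup ((fun a => ∑ j, c * max ((∑ i ∈ B j, (abar i + a i)) - V) 0) '' U) := by
  set T : ℝ := ∑ i, ahat i with hT
  have hTpos : 0 < T := lt_of_lt_of_le hΩ hΩub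
  set a : Fin m → ℝ := fun i => ahat i * (Ω / T) with ha
  have hq0 : 0 ≤ Ω / T := div_nonneg hΩ.le hTpos.le
  have hq1 : Ω / T ≤ 1 := (div_le_one hTpos).mpr hΩub
  have hai : ∀ i, 0 ≤ a i ∧ a i ≤ ahat i := by
    intro i
    constructor
    · exact mul_nonneg (hahat i) hq0
    · calc ahat i * (Ω / T) ≤ ahat i * 1 :=
            mul_le_mul_of_nonneg_left hq1 (hahat i)
        _ = ahat i := mul_one _
  have hasum : ∑ i, a i = Ω := by
    simp only [ha]
    rw [← Finset.sum_mul, ← hT, mul_comm, div_mul_cancel₀ _ hTpos.ne']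
  have haU : a ∈ U := by
    rw [hU]; exact ⟨hai, hasum.le⟩
  -- bounded above
  have hbdd : BddAbove ((fun a => ∑ j, c * max ((∑ i ∈ B j, (abar i + a i)) - V) 0) '' U) := by
    refine ⟨∑ j, c * max ((∑ i ∈ B j, (abar i + ahat i)) - V) 0, ?_⟩
    rintro x ⟨b, hb, rfl⟩
    rw [hU] at hb
    refine Finset.sum_le_sum fun j _ => ?_
    refine mul_le_mul_of_nonneg_left (max_le_max ?_ le_rfl) hc
    exact sub_le_sub_right (Finset.sum_le_sum fun i _ =>
      add_le_add_right ((hb.1 i).2) _) _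
  refine le_trans ?_ (le_csSup hbdd ⟨a, haU, rfl⟩)
  -- main inequality
  set F := Finset.univ.filter (fun j : Fin n => (B j).Nonempty) with hF
  set S : Fin n → ℝ := fun j => ∑ i ∈ B j, (abar i + a i) with hS
  have hSsum : ∑ j, S j = (∑ i, abar i) + Ω := by
    have huniv : Finset.univ.biUnion B = Finset.univ := by
      ext i; simp only [Finset.mem_biUnion, Finset.mem_univ, true_and, iff_true]
      exact hcover i
    have hpd : (↑(Finset.univ : Finset (Fin n)) : Set (Fin n)).PairwiseDisjoint B :=
      fun j _ j' _ hne => hdisj j j' hne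
    calc ∑ j, S j = ∑ i ∈ Finset.univ.biUnion B, (abar i + a i) :=
          (Finset.sum_biUnion hpd).symm
      _ = ∑ i, (abar i + a i) := by rw [huniv]
      _ = (∑ i, abar i) + ∑ i, a i := Finset.sum_add_distrib
      _ = (∑ i, abar i) + Ω := by rw [hasum]
  have hFsum : ∑ j ∈ F, S j = (∑ i, abar i) + Ω := by
    rw [← hSsum]
    refine Finset.sum_subset (Finset.filter_subset _ _) fun j _ hj => ?_
    have : B j = ∅ := by
      by_contra h
      exact hj (Finset.mem_filter.mpr ⟨Finset.mem_univ j, Finset.nonempty_iff_ne_empty.mpr h⟩)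
    simp [hS, this]
  calc c * ((∑ i, abar i) + Ω - k * V)
      ≤ c * ((∑ i, abar i) + Ω - F.card * V) := by
        refine mul_le_mul_of_nonneg_left (sub_le_sub_left ?_ _) hc
        exact mul_le_mul_of_nonneg_right (by exact_mod_cast hknonempty) hV.le
    _ = ∑ j ∈ F, c * (S j - V) := by
        rw [← Finset.mul_sum, Finset.sum_sub_distrib, hFsum, Finset.sum_const,
          nsmul_eq_mul]
    _ ≤ ∑ j ∈ F, c * max (S j - V) 0 :=
        Finset.sum_le_sum fun j _ =>
          mul_le_mul_of_nonneg_left (le_max_left _ _) hc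
    _ ≤ ∑ j, c * max (S j - V) 0 := by
        refine Finset.sum_le_sum_of_subset_of_nonneg (Finset.filter_subset _ _)
          fun j _ _ => mul_nonneg hc (le_max_right _ _)
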